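/- arXiv:math/0304038 — 2 statements merged into one kernel-verified Lean document; each statement's English description precedes it below -/
import Mathlib

section
/- Let L be a Lie superalgebra over R, let P : L → L be an R-linear parity-preserving projector whose image V = P(L) is an abelian subalgebra and which satisfies the distributive law, and let Δ ∈ L be odd. Say an element z ∈ L has order ≤ r with respect to V if every (r+1)-fold commutator [⋯[[z,a₁],a₂],…,a_{r+1}] with a₁,…,a_{r+1} ∈ V vanishes. If Δ² = (1/2)[Δ,Δ] has order ≤ r with respect to V, then the higher derived brackets of Δ satisfy the generalized Jacobi identities of all orders n > r: Jⁿ_Δ(a₁,…,aₙ) = 0 for all n ≥ r+1 and all homogeneous a₁,…,aₙ ∈ V. -/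
/-!
Higher derived brackets (Th. Voronov, "Higher derived brackets and homotopy algebras").

STATEMENT 0: For a Lie superalgebra `L` over `R` with a parity-preserving projector `P`
onto an abelian subalgebra satisfying the distributive law, and an odd element `Δ`,
the `n`-th Jacobiator of the higher derived brackets of `Δ` equals the
`n`-th derived bracket of `Δ² = (1/2)[Δ,Δ]`.
-/

open Finset

/-- The sign `(-1)^e` for a parity `e : ZMod 2`, as an element of `R`. -/
def sgn (R : Type*) [CommRing R] (e : ZMod 2) : R := if e = 0 then 1 else -1

variable {R : Type*} [CommRing R] {L : Type*} [AddCommGroup L] [Module R L]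

/-- Iterated bracket `[...[[z,a₁],a₂],...,aₙ]`. -/
def iterBr (br : L →ₗ[R] L →ₗ[R] L) : L → List L → L
  | z, [] => z
  | z, a :: rest => iterBr br (br z a) rest

/-- The `n`-th higher derived bracket `{a₁,...,aₙ}_Δ := P [...[[Δ,a₁],a₂],...,aₙ]`. -/
def dbr (br : L →ₗ[R] L →ₗ[R] L) (P : L →ₗ[R] L) (Δ : L) (n : ℕ) (a : Fin n → L) : L :=
  P (iterBr br Δ (List.ofFn a))

/-- The exponent of the Koszul sign of the `(k,l)`-shuffle determined by the
`k`-element subset `S ⊆ {0,...,n-1}` on homogeneous arguments of parities `p i`: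
a factor `(-1)^{p i · p j}` for each pair `i < j` with `i ∉ S`, `j ∈ S`. -/
def koszulExp {n : ℕ} (p : Fin n → ZMod 2) (S : Finset (Fin n)) : ZMod 2 :=
  ∑ j ∈ S, ∑ i ∈ Sᶜ.filter (fun i => i < j), p i * p j

/-- The `n`-th Jacobiator
`Jⁿ(a₁,…,aₙ) = Σ_{k+l=n} Σ_{(k,l)-shuffles σ} (−1)^α {{a_{σ(1)},…,a_{σ(k)}}, a_{σ(k+1)},…,a_{σ(n)}}`
of a family of `n`-ary operations, the sum over `(k,l)`-shuffles being realized as a sum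
over the `k`-element subsets `S` of indices (listed in increasing order inside each group),
with `(−1)^α` the Koszul sign of the shuffle on arguments of parities `p i`. -/
def Jac (R : Type*) [CommRing R] {M : Type*} [AddCommGroup M] [Module R M]
    (br : ∀ n : ℕ, (Fin n → M) → M) (n : ℕ) (p : Fin n → ZMod 2) (a : Fin n → M) : M :=
  ∑ S : Finset (Fin n),
    sgn R (koszulExp p S) •
      br (Sᶜ.card + 1)
        (Fin.cons (br S.card (fun i => a ((S.orderIsoOfFin rfl i : Fin n))))
          (fun i => a ((Sᶜ.orderIsoOfFin rfl i : Fin n))))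

/-! ### sign lemmas -/

lemma zmod2_cases (x : ZMod 2) : x = 0 ∨ x = 1 := by revert x; decide

lemma sgn_add (x y : ZMod 2) : sgn R (x + y) = sgn R x * sgn R y := by
  rcases zmod2_cases x with h | h <;> rcases zmod2_cases y with h' | h' <;>
    subst h <;> subst h' <;> simp [sgn, show (1+1 : ZMod 2) = 0 from rfl]

@[simp] lemma sgn_zero : sgn R 0 = 1 := by simp [sgn]
@[simp] lemma sgn_one : sgn R 1 = -1 := by simp [sgn]

lemma sgn_one_add (x : ZMod 2) : sgn R (1 + x) = -sgn R x := by
  rw [sgn_add]; simp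

lemma zmod2_add_self (x : ZMod 2) : x + x = 0 := by
  rcases zmod2_cases x with h | h <;> subst h <;> rfl

lemma zmod2_aux1 (px py pc : ZMod 2) : (px + py) * pc + pc * px = pc * py := by
  revert px py pc; decide

lemma zmod2_aux2 (px py pc : ZMod 2) : (px + py) * pc + pc * px + pc * py = 0 := by
  revert px py pc; decide

/-! ### iterBr basics -/

@[simp] lemma iterBr_nil (br : L →ₗ[R] L →ₗ[R] L) (z : L) : iterBr br z [] = z := rfl
@[simp] lemma iterBr_cons (br : L →ₗ[R] L →ₗ[R] L) (z a : L) (l : List L) :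
    iterBr br z (a :: l) = iterBr br (br z a) l := rfl

/-- `iterBr` as a linear map in the leftmost slot. -/
def iterBrL (br : L →ₗ[R] L →ₗ[R] L) : List L → L →ₗ[R] L
  | [] => LinearMap.id
  | a :: l => (iterBrL br l).comp (br.flip a)

lemma iterBr_eq_iterBrL (br : L →ₗ[R] L →ₗ[R] L) (l : List L) (z : L) :
    iterBr br z l = iterBrL br l z := by
  induction l generalizing z with
  | nil => rfl
  | cons a l ih => simp [iterBrL, ih]

@[simp] lemma iterBr_zero (br : L →ₗ[R] L →ₗ[R] L) (l : List L) : iterBr br 0 l = 0 := by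
  rw [iterBr_eq_iterBrL]; exact map_zero _

lemma iterBr_add (br : L →ₗ[R] L →ₗ[R] L) (x y : L) (l : List L) :
    iterBr br (x + y) l = iterBr br x l + iterBr br y l := by
  simp [iterBr_eq_iterBrL]

lemma iterBr_smul (br : L →ₗ[R] L →ₗ[R] L) (c : R) (x : L) (l : List L) :
    iterBr br (c • x) l = c • iterBr br x l := by
  simp [iterBr_eq_iterBrL]

lemma iterBr_sum {ι : Type*} (br : L →ₗ[R] L →ₗ[R] L) (s : Finset ι) (f : ι → L) (l : List L) :
    iterBr br (∑ i ∈ s, f i) l = ∑ i ∈ s, iterBr br (f i) l := by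
  simp [iterBr_eq_iterBrL]

lemma iterBr_append (br : L →ₗ[R] L →ₗ[R] L) (z : L) (l₁ l₂ : List L) :
    iterBr br z (l₁ ++ l₂) = iterBr br (iterBr br z l₁) l₂ := by
  induction l₁ generalizing z with
  | nil => rfl
  | cons a l ih => simp [ih]

/-! ### selections -/

def sel {n : ℕ} {α : Type*} (S : Finset (Fin n)) (v : Fin n → α) : List α :=
  (S.sort (· ≤ ·)).map v

lemma sort_eq_filter_finRange {n : ℕ} (S : Finset (Fin n)) :
    S.sort (· ≤ ·) = (List.finRange n).filter (fun i => i ∈ S) := by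
  have hs : List.Pairwise (· ≤ ·) ((List.finRange n).filter (fun i => i ∈ S)) :=
    (List.Pairwise.sublist List.filter_sublist (List.pairwise_lt_finRange n)).imp le_of_lt
  have hp : (S.sort (· ≤ ·)).Perm ((List.finRange n).filter (fun i => i ∈ S)) := by
    refine (List.perm_ext_iff_of_nodup (S.sort_nodup _) ((List.nodup_finRange n).filter _)).2 ?_
    intro a
    simp
  exact List.Perm.eq_of_pairwise' (S.pairwise_sort _) hs hp

lemma mem_map_succ_iff {m : ℕ} (T : Finset (Fin m)) (i : Fin m) :
    (Fin.succ i ∈ T.map (Fin.succEmb m)) ↔ i ∈ T := by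
  simp [(Fin.succ_injective m).eq_iff]

lemma zero_not_mem_map_succ {m : ℕ} (T : Finset (Fin m)) :
    (0 : Fin (m+1)) ∉ T.map (Fin.succEmb m) := by
  simp [Fin.succ_ne_zero]

lemma compl_map_succ {m : ℕ} (T : Finset (Fin m)) :
    (T.map (Fin.succEmb m))ᶜ = insert 0 (Tᶜ.map (Fin.succEmb m)) := by
  ext i
  induction i using Fin.cases <;>
    simp [Fin.succ_ne_zero, (Fin.succ_injective m).eq_iff]

lemma compl_insert_zero_map_succ {m : ℕ} (T : Finset (Fin m)) :
    (insert 0 (T.map (Fin.succEmb m)))ᶜ = Tᶜ.map (Fin.succEmb m) := by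
  ext i
  induction i using Fin.cases <;>
    simp [Fin.succ_ne_zero, (Fin.succ_injective m).eq_iff]

lemma filter_finRange_succ {m : ℕ} (S : Finset (Fin (m+1))) :
    (List.finRange (m+1)).filter (fun i => i ∈ S)
      = (if (0 : Fin (m+1)) ∈ S then [(0 : Fin (m+1))] else [])
          ++ ((List.finRange m).filter (fun i => Fin.succ i ∈ S)).map Fin.succ := by
  rw [List.finRange_succ, List.filter_cons, List.filter_map]
  have : (List.filter ((fun i => decide (i ∈ S)) ∘ Fin.succ) (List.finRange m))
      = List.filter (fun i => decide (Fin.succ i ∈ S)) (List.finRange m) := by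
    apply List.filter_congr; intro a _; rfl
  rw [this]
  by_cases h : (0 : Fin (m+1)) ∈ S <;> simp [h]

lemma sel_map_succ {m : ℕ} {α : Type*} (T : Finset (Fin m)) (b : α) (v : Fin m → α) :
    sel (T.map (Fin.succEmb m)) (Fin.cons b v) = sel T v := by
  unfold sel
  rw [sort_eq_filter_finRange, sort_eq_filter_finRange, filter_finRange_succ]
  rw [if_neg (zero_not_mem_map_succ T)]
  have : (List.filter (fun i => decide (Fin.succ i ∈ T.map (Fin.succEmb m))) (List.finRange m))
      = List.filter (fun i => decide (i ∈ T)) (List.finRange m) := by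
    apply List.filter_congr; intro a _; simp [mem_map_succ_iff]
  rw [this]
  simp [List.map_map, Function.comp_def]

lemma sel_insert_zero {m : ℕ} {α : Type*} (T : Finset (Fin m)) (b : α) (v : Fin m → α) :
    sel (insert 0 (T.map (Fin.succEmb m))) (Fin.cons b v) = b :: sel T v := by
  unfold sel
  rw [sort_eq_filter_finRange, sort_eq_filter_finRange, filter_finRange_succ]
  rw [if_pos (mem_insert_self _ _)]
  have : (List.filter (fun i => decide (Fin.succ i ∈ insert 0 (T.map (Fin.succEmb m))))
        (List.finRange m))
      = List.filter (fun i => decide (i ∈ T)) (List.finRange m) := by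
    apply List.filter_congr; intro a _
    simp [mem_map_succ_iff, Fin.succ_ne_zero]
  rw [this]
  simp [List.map_map, Function.comp_def]

lemma map_sort_sum {n : ℕ} {M : Type*} [AddCommMonoid M] (S : Finset (Fin n))
    (f : Fin n → M) : ((S.sort (· ≤ ·)).map f).sum = ∑ i ∈ S, f i := by
  rw [← Finset.sum_map_toList]
  exact List.Perm.sum_eq (List.Perm.map f (S.sort_perm_toList _))

lemma ofFn_orderIso {n : ℕ} {α : Type*} (S : Finset (Fin n)) (a : Fin n → α) :
    List.ofFn (fun i => a ((S.orderIsoOfFin rfl i : Fin n))) = sel S a := by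
  apply List.ext_getElem
  · simp [sel]
  · intro i h1 h2
    simp [sel, Finset.coe_orderIsoOfFin_apply, Finset.orderEmbOfFin_apply]

/-! ### sums over subsets -/

lemma sum_map_succ {m : ℕ} {M : Type*} [AddCommMonoid M] (T : Finset (Fin m))
    (q0 : M) (q : Fin m → M) :
    ∑ j ∈ T.map (Fin.succEmb m), (Fin.cons q0 q : Fin (m+1) → M) j = ∑ j ∈ T, q j := by
  rw [Finset.sum_map]
  simp

lemma filter_lt_succ {m : ℕ} (A : Finset (Fin m)) (j : Fin m) :
    (insert 0 (A.map (Fin.succEmb m))).filter (fun i => i < Fin.succ j)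
      = insert 0 ((A.filter (fun i => i < j)).map (Fin.succEmb m)) := by
  rw [Finset.filter_insert, if_pos (Fin.succ_pos j)]
  congr 1
  ext i
  induction i using Fin.cases <;>
    simp [Fin.succ_ne_zero, (Fin.succ_injective m).eq_iff, Fin.succ_lt_succ_iff]

lemma filter_map_lt_succ {m : ℕ} (A : Finset (Fin m)) (j : Fin m) :
    (A.map (Fin.succEmb m)).filter (fun i => i < Fin.succ j)
      = (A.filter (fun i => i < j)).map (Fin.succEmb m) := by
  ext i
  induction i using Fin.cases <;>
    simp [Fin.succ_ne_zero, (Fin.succ_injective m).eq_iff, Fin.succ_lt_succ_iff]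

lemma koszulExp_map_succ {m : ℕ} (q0 : ZMod 2) (q : Fin m → ZMod 2) (T : Finset (Fin m)) :
    koszulExp (Fin.cons q0 q) (T.map (Fin.succEmb m))
      = koszulExp q T + q0 * ∑ j ∈ T, q j := by
  unfold koszulExp
  rw [Finset.sum_map, compl_map_succ]
  have h : ∀ j ∈ T, (∑ i ∈ (insert 0 (Tᶜ.map (Fin.succEmb m))).filter
        (fun i => i < (Fin.succEmb m) j),
        (Fin.cons q0 q : Fin (m+1) → ZMod 2) i
          * (Fin.cons q0 q : Fin (m+1) → ZMod 2) ((Fin.succEmb m) j))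
      = q0 * q j + ∑ i ∈ Tᶜ.filter (fun i => i < j), q i * q j := by
    intro j _
    rw [show ((Fin.succEmb m) j : Fin (m+1)) = Fin.succ j from rfl, filter_lt_succ]
    rw [Finset.sum_insert (by simp [Fin.succ_ne_zero]), Finset.sum_map]
    simp
  rw [Finset.sum_congr rfl h, Finset.sum_add_distrib, Finset.mul_sum]
  ring

lemma koszulExp_insert_zero {m : ℕ} (q0 : ZMod 2) (q : Fin m → ZMod 2) (T : Finset (Fin m)) :
    koszulExp (Fin.cons q0 q) (insert 0 (T.map (Fin.succEmb m))) = koszulExp q T := by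
  unfold koszulExp
  rw [Finset.sum_insert (zero_not_mem_map_succ T), compl_insert_zero_map_succ]
  have h0 : (Tᶜ.map (Fin.succEmb m)).filter (fun i => i < (0 : Fin (m+1))) = ∅ := by
    apply Finset.filter_false_of_mem
    intro i _
    exact (Fin.not_lt_zero i)
  rw [h0, Finset.sum_empty, zero_add, Finset.sum_map]
  apply Finset.sum_congr rfl
  intro j _
  rw [show ((Fin.succEmb m) j : Fin (m+1)) = Fin.succ j from rfl, filter_map_lt_succ,
    Finset.sum_map]
  simp

lemma sum_finset_fin_succ {m : ℕ} {M : Type*} [AddCommMonoid M]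
    (f : Finset (Fin (m+1)) → M) :
    ∑ S : Finset (Fin (m+1)), f S
      = ∑ T : Finset (Fin m), f (T.map (Fin.succEmb m))
        + ∑ T : Finset (Fin m), f (insert 0 (T.map (Fin.succEmb m))) := by
  classical
  rw [← Finset.sum_filter_add_sum_filter_not Finset.univ (fun S => (0 : Fin (m+1)) ∉ S) f]
  congr 1
  · refine (Finset.sum_bij' (i := fun (T : Finset (Fin m)) (_ : T ∈ Finset.univ) =>
        T.map (Fin.succEmb m))
      (j := fun S _ => S.preimage Fin.succ ((Fin.succ_injective m).injOn))
      ?_ ?_ ?_ ?_ ?_).symm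
    · intro T _; simp only [Finset.mem_filter, Finset.mem_univ, true_and]
      exact zero_not_mem_map_succ T
    · intro S _; simp
    · intro T _
      ext i; simp [Finset.mem_preimage, mem_map_succ_iff]
    · intro S hS
      simp only [Finset.mem_filter] at hS
      ext i
      induction i using Fin.cases with
      | zero => simp [Fin.succ_ne_zero, hS.2]
      | succ j => simp [mem_map_succ_iff, Finset.mem_preimage]
    · intro T _; rfl
  · refine (Finset.sum_bij' (i := fun (T : Finset (Fin m)) (_ : T ∈ Finset.univ) =>
        insert 0 (T.map (Fin.succEmb m)))
      (j := fun S _ => S.preimage Fin.succ ((Fin.succ_injective m).injOn))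
      ?_ ?_ ?_ ?_ ?_).symm
    · intro T _; simp
    · intro S _; simp
    · intro T _
      ext i
      simp [Finset.mem_preimage, mem_map_succ_iff, Fin.succ_ne_zero]
    · intro S hS
      simp only [Finset.mem_filter, not_not] at hS
      ext i
      induction i using Fin.cases with
      | zero => simp [hS.2]
      | succ j => simp [mem_map_succ_iff, Finset.mem_preimage, Fin.succ_ne_zero]
    · intro T _; rfl

/-! ### koszul complement -/

lemma koszulExp_compl {n : ℕ} (q : Fin n → ZMod 2) (S : Finset (Fin n)) :
    koszulExp q Sᶜ = koszulExp q S + (∑ i ∈ S, q i) * (∑ j ∈ Sᶜ, q j) := by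
  have key : (∑ i ∈ S, q i) * (∑ j ∈ Sᶜ, q j) = koszulExp q S + koszulExp q Sᶜ := by
    rw [Finset.sum_mul_sum]
    have split : ∀ a ∈ S, (∑ b ∈ Sᶜ, q a * q b)
        = (∑ b ∈ Sᶜ.filter (fun b => b < a), q a * q b)
          + (∑ b ∈ Sᶜ.filter (fun b => a < b), q a * q b) := by
      intro a ha
      rw [← Finset.sum_filter_add_sum_filter_not Sᶜ (fun b => b < a)]
      congr 1
      apply Finset.sum_congr _ (fun _ _ => rfl)
      apply Finset.filter_congr
      intro b hb
      have hba : b ≠ a := by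
        intro h; rw [h] at hb; exact (Finset.mem_compl.1 hb) ha
      constructor
      · intro h
        rcases lt_trichotomy a b with h' | h' | h'
        · exact h'
        · exact absurd h'.symm hba
        · exact absurd h' h
      · intro h h'
        exact absurd (h.trans h') (lt_irrefl a)
    rw [Finset.sum_congr rfl split, Finset.sum_add_distrib]
    congr 1
    · unfold koszulExp
      apply Finset.sum_congr rfl
      intro a _
      apply Finset.sum_congr rfl
      intro b _
      exact mul_comm _ _
    · unfold koszulExp
      rw [compl_compl]
      have l1 : ∀ a ∈ S, (∑ b ∈ Sᶜ.filter (fun b => a < b), q a * q b)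
          = ∑ b ∈ Sᶜ, if a < b then q a * q b else 0 := fun a _ => Finset.sum_filter _ _
      have l2 : ∀ j ∈ Sᶜ, (∑ i ∈ S.filter (fun i => i < j), q i * q j)
          = ∑ i ∈ S, if i < j then q i * q j else 0 := fun j _ => Finset.sum_filter _ _
      refine Eq.trans (Finset.sum_congr rfl l1) ?_
      rw [Finset.sum_comm]
      exact (Finset.sum_congr rfl l2).symm
  rw [key]
  rw [← add_assoc, zmod2_add_self, zero_add]

/-! ### graded algebra lemmas -/

section Graded

variable (grading : ZMod 2 → Submodule R L) (br : L →ₗ[R] L →ₗ[R] L)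

lemma iterBr_grading
    (hgrade : ∀ (i j : ZMod 2) (a b : L), a ∈ grading i → b ∈ grading j →
      br a b ∈ grading (i + j)) :
    ∀ (l : List (L × ZMod 2)), (∀ x ∈ l, x.1 ∈ grading x.2) →
      ∀ (z : L) (pz : ZMod 2), z ∈ grading pz →
      iterBr br z (l.map Prod.fst) ∈ grading (pz + (l.map Prod.snd).sum) := by
  intro l
  induction l with
  | nil => intro _ z pz hz; simpa using hz
  | cons x t ih =>
      intro hl z pz hz
      have hx := hl x List.mem_cons_self
      have ht : ∀ y ∈ t, y.1 ∈ grading y.2 := fun y hy => hl y (List.mem_cons_of_mem x hy)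
      have := ih ht (br z x.1) (pz + x.2) (hgrade _ _ _ _ hz hx)
      simpa [add_assoc] using this

lemma sel_grading {n : ℕ}
    (hgrade : ∀ (i j : ZMod 2) (a b : L), a ∈ grading i → b ∈ grading j →
      br a b ∈ grading (i + j))
    (S : Finset (Fin n)) (v : Fin n → L) (q : Fin n → ZMod 2)
    (hv : ∀ i, v i ∈ grading (q i))
    (z : L) (pz : ZMod 2) (hz : z ∈ grading pz) :
    iterBr br z (sel S v) ∈ grading (pz + ∑ i ∈ S, q i) := by
  have h := iterBr_grading grading br hgrade
    ((S.sort (· ≤ ·)).map (fun i => (v i, q i)))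
    (by intro x hx
        simp only [List.mem_map] at hx
        obtain ⟨i, _, rfl⟩ := hx
        exact hv i)
    z pz hz
  rw [List.map_map, List.map_map] at h
  have e1 : (Prod.fst ∘ fun i => (v i, q i)) = v := rfl
  have e2 : (Prod.snd ∘ fun i => (v i, q i)) = q := rfl
  rw [e1, e2, map_sort_sum] at h
  exact h

/-- Pull an element of `V = range P` out of an iterated bracket whose arguments lie in `V`. -/
lemma br_range_iterBr
    (hgrade : ∀ (i j : ZMod 2) (a b : L), a ∈ grading i → b ∈ grading j →
      br a b ∈ grading (i + j))
    (hjacobi : ∀ (i j : ZMod 2) (a b c : L), a ∈ grading i → b ∈ grading j →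
      br a (br b c) = br (br a b) c + (sgn R (i * j)) • br b (br a c))
    (P : L →ₗ[R] L)
    (habelian : ∀ x y : L, br (P x) (P y) = 0)
    (v : L) (pv : ZMod 2) (hv : v ∈ grading pv) (hvP : v ∈ LinearMap.range P) :
    ∀ (l : List L), (∀ x ∈ l, x ∈ LinearMap.range P ∧ ∃ j, x ∈ grading j) →
    ∀ (z : L) (pz : ZMod 2), z ∈ grading pz →
    br v (iterBr br z l) = iterBr br (br v z) l := by
  intro l
  induction l with
  | nil => intro _ z pz _; rfl
  | cons x t ih =>
      intro hl z pz hz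
      obtain ⟨⟨wx, hwx⟩, ⟨jx, hjx⟩⟩ := hl x List.mem_cons_self
      have ht : ∀ y ∈ t, y ∈ LinearMap.range P ∧ ∃ j, y ∈ grading j :=
        fun y hy => hl y (List.mem_cons_of_mem x hy)
      simp only [iterBr_cons]
      rw [ih ht (br z x) (pz + jx) (hgrade _ _ _ _ hz hjx)]
      congr 1
      rw [hjacobi pv pz v z x hv hz]
      obtain ⟨wv, hwv⟩ := hvP
      have : br v x = 0 := by rw [← hwv, ← hwx]; exact habelian wv wx
      rw [this]
      simp

/-- Graded Leibniz rule for the rightmost slot. -/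
lemma br_br_right
    (hskew : ∀ (i j : ZMod 2) (a b : L), a ∈ grading i → b ∈ grading j →
      br a b = (-(sgn R (i * j))) • br b a)
    (hjacobi : ∀ (i j : ZMod 2) (a b c : L), a ∈ grading i → b ∈ grading j →
      br a (br b c) = br (br a b) c + (sgn R (i * j)) • br b (br a c))
    (hgrade : ∀ (i j : ZMod 2) (a b : L), a ∈ grading i → b ∈ grading j →
      br a b ∈ grading (i + j))
    (x y c : L) (px py pc : ZMod 2)
    (hx : x ∈ grading px) (hy : y ∈ grading py) (hc : c ∈ grading pc) :
    br (br x y) c = sgn R (pc * py) • br (br x c) y + br x (br y c) := by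
  have h1 : br (br x y) c = (-(sgn R ((px + py) * pc))) • br c (br x y) :=
    hskew (px + py) pc (br x y) c (hgrade _ _ _ _ hx hy) hc
  have h2 : br c (br x y) = br (br c x) y + sgn R (pc * px) • br x (br c y) :=
    hjacobi pc px c x y hc hx
  have h3 : br c x = (-(sgn R (pc * px))) • br x c := hskew pc px c x hc hx
  have h4 : br c y = (-(sgn R (pc * py))) • br y c := hskew pc py c y hc hy
  rw [h1, h2, h3, h4]
  rw [map_smul, LinearMap.smul_apply, map_smul]
  rw [smul_add, smul_smul, smul_smul, smul_smul]
  congr 1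
  · congr 1
    rw [neg_mul_neg, ← sgn_add, zmod2_aux1]
  · rw [show -sgn R ((px + py) * pc) * sgn R (pc * px) * -sgn R (pc * py)
        = sgn R ((px + py) * pc) * sgn R (pc * px) * sgn R (pc * py) from by ring,
      ← sgn_add, ← sgn_add, zmod2_aux2, sgn_zero, one_smul]

end Graded

/-- Iterated graded Leibniz rule: expansion of `[...[[x,y],a₁],...,aₙ]` over subsets. -/
lemma leibniz_expand (grading : ZMod 2 → Submodule R L) (br : L →ₗ[R] L →ₗ[R] L)
    (hgrade : ∀ (i j : ZMod 2) (a b : L), a ∈ grading i → b ∈ grading j →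
      br a b ∈ grading (i + j))
    (hskew : ∀ (i j : ZMod 2) (a b : L), a ∈ grading i → b ∈ grading j →
      br a b = (-(sgn R (i * j))) • br b a)
    (hjacobi : ∀ (i j : ZMod 2) (a b c : L), a ∈ grading i → b ∈ grading j →
      br a (br b c) = br (br a b) c + (sgn R (i * j)) • br b (br a c)) :
    ∀ (m : ℕ) (v : Fin m → L) (q : Fin m → ZMod 2), (∀ i, v i ∈ grading (q i)) →
    ∀ (x y : L) (px py : ZMod 2), x ∈ grading px → y ∈ grading py →
    iterBr br (br x y) (List.ofFn v) =
      ∑ S : Finset (Fin m), sgn R ((∑ j ∈ S, q j) * py + koszulExp q S) •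
        br (iterBr br x (sel S v)) (iterBr br y (sel Sᶜ v)) := by
  intro m
  induction m with
  | zero =>
      intro v q hv x y px py hx hy
      rw [show (Finset.univ : Finset (Finset (Fin 0))) = {∅} from
        Finset.eq_singleton_iff_unique_mem.2
          ⟨Finset.mem_univ _, fun S _ => Finset.eq_empty_of_isEmpty S⟩,
        Finset.sum_singleton]
      simp [sel, koszulExp]
  | succ m ih =>
      intro v q hv x y px py hx hy
      obtain ⟨b, vt, rfl⟩ : ∃ b vt, v = Fin.cons b vt :=
        ⟨v 0, Fin.tail v, (Fin.cons_self_tail v).symm⟩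
      obtain ⟨q0, qt, rfl⟩ : ∃ q0 qt, q = Fin.cons q0 qt :=
        ⟨q 0, Fin.tail q, (Fin.cons_self_tail q).symm⟩
      have hb : b ∈ grading q0 := by simpa using hv 0
      have hvt : ∀ i, vt i ∈ grading (qt i) := fun i => by simpa using hv i.succ
      rw [List.ofFn_succ]
      simp only [Fin.cons_zero, Fin.cons_succ, iterBr_cons]
      rw [br_br_right grading br hskew hjacobi hgrade x y b px py q0 hx hy hb]
      rw [iterBr_add, iterBr_smul]
      rw [ih vt qt hvt (br x b) y (px + q0) py (hgrade _ _ _ _ hx hb) hy]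
      rw [ih vt qt hvt x (br y b) px (py + q0) hx (hgrade _ _ _ _ hy hb)]
      rw [sum_finset_fin_succ (fun S => sgn R ((∑ j ∈ S, Fin.cons q0 qt j) * py
            + koszulExp (Fin.cons q0 qt) S) •
          br (iterBr br x (sel S (Fin.cons b vt))) (iterBr br y (sel Sᶜ (Fin.cons b vt))))]
      rw [add_comm]
      congr 1
      · -- second Leibniz term ↔ subsets not containing 0
        apply Finset.sum_congr rfl
        intro T _
        rw [sum_map_succ, koszulExp_map_succ, sel_map_succ, compl_map_succ, sel_insert_zero,
          iterBr_cons]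
        congr 2
        ring
      · -- first Leibniz term ↔ subsets containing 0
        rw [Finset.smul_sum]
        apply Finset.sum_congr rfl
        intro T _
        rw [Finset.sum_insert (zero_not_mem_map_succ T), Fin.cons_zero, sum_map_succ,
          koszulExp_insert_zero, sel_insert_zero, compl_insert_zero_map_succ, sel_map_succ,
          iterBr_cons, smul_smul, ← sgn_add]
        congr 2
        ring

lemma zmod2_aux3 (s K : ZMod 2) : s * 1 + K + s = K := by revert s K; decide

lemma zmod2_aux4 (s c K : ZMod 2) :
    s * 1 + K + (1 + (1 + s) * (1 + c) + c) = K + s * c := by revert s c K; decide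

lemma sum_compl_reindex {n : ℕ} {M : Type*} [AddCommMonoid M]
    (f : Finset (Fin n) → M) :
    (∑ S : Finset (Fin n), f Sᶜ) = ∑ S : Finset (Fin n), f S :=
  Fintype.sum_bijective compl (Function.Involutive.bijective (fun S => compl_compl S)) _ _
    (fun _ => rfl)

/-- **Statement 0**: the Jacobiator of the higher derived brackets equals the
derived bracket of `Δ² = (1/2)[Δ,Δ]`. -/
lemma jac_eq_derived_of_square
    (grading : ZMod 2 → Submodule R L)
    (br : L →ₗ[R] L →ₗ[R] L)
    (hgrade : ∀ (i j : ZMod 2) (a b : L), a ∈ grading i → b ∈ grading j →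
      br a b ∈ grading (i + j))
    (hskew : ∀ (i j : ZMod 2) (a b : L), a ∈ grading i → b ∈ grading j →
      br a b = (-(sgn R (i * j))) • br b a)
    (hjacobi : ∀ (i j : ZMod 2) (a b c : L), a ∈ grading i → b ∈ grading j →
      br a (br b c) = br (br a b) c + (sgn R (i * j)) • br b (br a c))
    (P : L →ₗ[R] L)
    (hPparity : ∀ (i : ZMod 2) (x : L), x ∈ grading i → P x ∈ grading i)
    (habelian : ∀ x y : L, br (P x) (P y) = 0)
    (hdistrib : ∀ x y : L, P (br x y) = P (br (P x) y) + P (br x (P y)))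
    [Invertible (2 : R)]
    (Δ : L) (hΔ : Δ ∈ grading 1)
    (n : ℕ) (p : Fin n → ZMod 2) (a : Fin n → L)
    (haV : ∀ i, a i ∈ LinearMap.range P) (hahom : ∀ i, a i ∈ grading (p i)) :
    Jac R (dbr br P Δ) n p a = P (iterBr br ((⅟(2 : R)) • br Δ Δ) (List.ofFn a)) := by
  classical
  have hlmem : ∀ S : Finset (Fin n), ∀ x ∈ sel S a,
      x ∈ LinearMap.range P ∧ ∃ j, x ∈ grading j := by
    intro S x hx
    simp only [sel, List.mem_map] at hx
    obtain ⟨i, _, rfl⟩ := hx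
    exact ⟨haV i, ⟨p i, hahom i⟩⟩
  have hX : ∀ S : Finset (Fin n),
      iterBr br Δ (sel S a) ∈ grading (1 + ∑ i ∈ S, p i) :=
    fun S => sel_grading grading br hgrade S a p hahom Δ 1 hΔ
  have hPX : ∀ S : Finset (Fin n),
      P (iterBr br Δ (sel S a)) ∈ grading (1 + ∑ i ∈ S, p i) :=
    fun S => hPparity _ _ (hX S)
  have hPXr : ∀ S : Finset (Fin n),
      P (iterBr br Δ (sel S a)) ∈ LinearMap.range P := fun S => ⟨_, rfl⟩
  -- the Jacobiator in terms of `G S`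
  have hJac : Jac R (dbr br P Δ) n p a
      = ∑ S : Finset (Fin n), sgn R (koszulExp p S) •
          P (iterBr br (br Δ (P (iterBr br Δ (sel S a)))) (sel Sᶜ a)) := by
    unfold Jac dbr
    apply Finset.sum_congr rfl
    intro S _
    congr 1
    rw [List.ofFn_succ]
    simp only [Fin.cons_zero, Fin.cons_succ]
    rw [ofFn_orderIso, ofFn_orderIso, iterBr_cons]
  -- first half term
  have half1 : ∀ S : Finset (Fin n),
      P (br (P (iterBr br Δ (sel S a))) (iterBr br Δ (sel Sᶜ a)))
        = sgn R (∑ i ∈ S, p i) •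
            P (iterBr br (br Δ (P (iterBr br Δ (sel S a)))) (sel Sᶜ a)) := by
    intro S
    have c1 : br (P (iterBr br Δ (sel S a))) (iterBr br Δ (sel Sᶜ a))
        = iterBr br (br (P (iterBr br Δ (sel S a))) Δ) (sel Sᶜ a) :=
      br_range_iterBr grading br hgrade hjacobi P habelian _ _ (hPX S) (hPXr S)
        (sel Sᶜ a) (hlmem Sᶜ) Δ 1 hΔ
    rw [c1, hskew _ 1 _ _ (hPX S) hΔ, mul_one, sgn_one_add, neg_neg, iterBr_smul, map_smul]
  -- second half term
  have half2 : ∀ S : Finset (Fin n),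
      P (br (iterBr br Δ (sel S a)) (P (iterBr br Δ (sel Sᶜ a))))
        = sgn R (1 + (1 + ∑ i ∈ S, p i) * (1 + ∑ i ∈ Sᶜ, p i) + ∑ i ∈ Sᶜ, p i) •
            P (iterBr br (br Δ (P (iterBr br Δ (sel Sᶜ a)))) ((sel (Sᶜ)ᶜ a))) := by
    intro S
    have c1 : br (P (iterBr br Δ (sel Sᶜ a))) (iterBr br Δ (sel S a))
        = iterBr br (br (P (iterBr br Δ (sel Sᶜ a))) Δ) (sel S a) :=
      br_range_iterBr grading br hgrade hjacobi P habelian _ _ (hPX Sᶜ) (hPXr Sᶜ)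
        (sel S a) (hlmem S) Δ 1 hΔ
    rw [hskew _ _ _ _ (hX S) (hPX Sᶜ), c1,
      hskew _ 1 _ _ (hPX Sᶜ) hΔ, mul_one, sgn_one_add, neg_neg]
    rw [iterBr_smul, smul_smul, map_smul, compl_compl]
    congr 1
    rw [show -sgn R ((1 + ∑ i ∈ S, p i) * (1 + ∑ i ∈ Sᶜ, p i))
        = sgn R (1 + (1 + ∑ i ∈ S, p i) * (1 + ∑ i ∈ Sᶜ, p i)) from (sgn_one_add _).symm,
      ← sgn_add]
  -- main computation
  have expand := leibniz_expand grading br hgrade hskew hjacobi n a p hahom Δ Δ 1 1 hΔ hΔ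
  rw [hJac, iterBr_smul, map_smul, expand, map_sum]
  simp only [map_smul]
  have step : ∀ S ∈ (Finset.univ : Finset (Finset (Fin n))),
      sgn R ((∑ j ∈ S, p j) * 1 + koszulExp p S) • P (br (iterBr br Δ (sel S a))
          (iterBr br Δ (sel Sᶜ a)))
      = sgn R (koszulExp p S) •
          P (iterBr br (br Δ (P (iterBr br Δ (sel S a)))) (sel Sᶜ a))
        + sgn R (koszulExp p Sᶜ) •
          P (iterBr br (br Δ (P (iterBr br Δ (sel Sᶜ a)))) (sel (Sᶜ)ᶜ a)) := by
    intro S _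
    rw [hdistrib, smul_add, half1 S, half2 S, smul_smul, smul_smul, ← sgn_add, ← sgn_add,
      zmod2_aux3, zmod2_aux4, koszulExp_compl]
  rw [Finset.sum_congr rfl step, Finset.sum_add_distrib]
  rw [sum_compl_reindex (fun S => sgn R (koszulExp p S) •
      P (iterBr br (br Δ (P (iterBr br Δ (sel S a)))) (sel Sᶜ a)))]
  rw [← two_smul R, smul_smul, invOf_mul_self, one_smul]

/-- If `Δ² = (1/2)[Δ,Δ]` has order `≤ r` with respect to `V = P(L)`
(every `(r+1)`-fold commutator of `Δ²` with elements of `V` vanishes), then the higher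
derived brackets of `Δ` satisfy the generalized Jacobi identities of all orders `n > r`:
`Jⁿ_Δ(a₁,…,aₙ) = 0` for all `n ≥ r+1` and homogeneous `a₁,…,aₙ ∈ V`. -/
theorem higher_derived_brackets_jacobi_of_order_le
    (R : Type*) [CommRing R] [Invertible (2 : R)]
    (L : Type*) [AddCommGroup L] [Module R L]
    (grading : ZMod 2 → Submodule R L)
    (hdirect : DirectSum.IsInternal grading)
    (br : L →ₗ[R] L →ₗ[R] L)
    (hgrade : ∀ (i j : ZMod 2) (a b : L), a ∈ grading i → b ∈ grading j →
      br a b ∈ grading (i + j))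
    (hskew : ∀ (i j : ZMod 2) (a b : L), a ∈ grading i → b ∈ grading j →
      br a b = (-(sgn R (i * j))) • br b a)
    (hjacobi : ∀ (i j : ZMod 2) (a b c : L), a ∈ grading i → b ∈ grading j →
      br a (br b c) = br (br a b) c + (sgn R (i * j)) • br b (br a c))
    (P : L →ₗ[R] L) (hproj : ∀ x, P (P x) = P x)
    (hPparity : ∀ (i : ZMod 2) (x : L), x ∈ grading i → P x ∈ grading i)
    (habelian : ∀ x y : L, br (P x) (P y) = 0)
    (hdistrib : ∀ x y : L, P (br x y) = P (br (P x) y) + P (br x (P y)))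
    (Δ : L) (hΔ : Δ ∈ grading 1)
    (r : ℕ)
    (horder : ∀ b : Fin (r + 1) → L, (∀ i, b i ∈ LinearMap.range P) →
      iterBr br ((⅟(2 : R)) • br Δ Δ) (List.ofFn b) = 0)
    (n : ℕ) (hn : r + 1 ≤ n) (p : Fin n → ZMod 2) (a : Fin n → L)
    (haV : ∀ i, a i ∈ LinearMap.range P)
    (hahom : ∀ i, a i ∈ grading (p i)) :
    Jac R (dbr br P Δ) n p a = 0 := by
  rw [jac_eq_derived_of_square grading br hgrade hskew hjacobi P hPparity habelian hdistrib
    Δ hΔ n p a haV hahom]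
  have htake : (List.ofFn a).take (r+1)
      = List.ofFn (fun i : Fin (r+1) => a ⟨i, lt_of_lt_of_le i.2 hn⟩) := by
    apply List.ext_getElem
    · simp [Nat.min_eq_left hn]
    · intro i h1 h2
      simp only [List.getElem_take, List.getElem_ofFn]
  have hsplit : List.ofFn a
      = List.ofFn (fun i : Fin (r+1) => a ⟨i, lt_of_lt_of_le i.2 hn⟩)
        ++ (List.ofFn a).drop (r+1) := by
    rw [← htake, List.take_append_drop]
  rw [hsplit, iterBr_append,
    horder (fun i : Fin (r+1) => a ⟨i, lt_of_lt_of_le i.2 hn⟩) (fun i => haV _),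
    iterBr_zero, map_zero]
end

section
/- Let A be a commutative associative unital algebra over a commutative ring R and let Δ ∈ End(A) be a differential operator of order ≤ s in the sense that every (s+1)-fold commutator […[[Δ, L_{f₀}], L_{f₁}],…, L_{f_s}] with f₀,…,f_s ∈ A vanishes. Then all derived brackets of Δ with more than s arguments vanish, and the s-th derived bracket is a derivation (satisfies the Leibniz rule) in each argument: {f₁,…,f_{s−1}, g·h}_Δ = {f₁,…,f_{s−1}, g}_Δ·h + {f₁,…,f_{s−1}, h}_Δ·g for all f₁,…,f_{s−1}, g, h ∈ A. -/
/-- Iterated commutator `[...[[Δ, L_{f₁}], L_{f₂}],..., L_{fₙ}]` of an endomorphism `Δ`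
of a commutative algebra `A` with the multiplication operators `L_{fᵢ}`. -/
def iterC (R : Type*) [CommRing R] (A : Type*) [CommRing A] [Algebra R A] :
    Module.End R A → List A → Module.End R A
  | Δ, [] => Δ
  | Δ, f :: rest =>
      iterC R A (Δ * LinearMap.mulLeft R f - LinearMap.mulLeft R f * Δ) rest

lemma iterC_append (R : Type*) [CommRing R] (A : Type*) [CommRing A] [Algebra R A]
    (Δ : Module.End R A) (fs gs : List A) :
    iterC R A Δ (fs ++ gs) = iterC R A (iterC R A Δ fs) gs := by
  induction fs generalizing Δ with
  | nil => rfl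
  | cons f t ih => exact ih _

lemma iterC_zero (R : Type*) [CommRing R] (A : Type*) [CommRing A] [Algebra R A]
    (fs : List A) : iterC R A 0 fs = 0 := by
  induction fs with
  | nil => rfl
  | cons f t ih => simp only [iterC, zero_mul, mul_zero, sub_zero]; exact ih

lemma iterC_len (R : Type*) [CommRing R] (A : Type*) [CommRing A] [Algebra R A]
    (Δ : Module.End R A) (s : ℕ)
    (horder : ∀ f : Fin (s + 1) → A, iterC R A Δ (List.ofFn f) = 0)
    (fs : List A) (h : fs.length = s + 1) : iterC R A Δ fs = 0 := by
  have key : List.ofFn (fun i : Fin (s + 1) => fs.get (Fin.cast h.symm i)) = fs := by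
    apply List.ext_getElem <;> simp [h]
    rintro (_|n) h1 <;> simp
  rw [← key]; exact horder _

/-- Let `Δ ∈ End(A)` be a differential operator of order `≤ s`, i.e.
every `(s+1)`-fold commutator `[…[[Δ, L_{f₀}], L_{f₁}],…, L_{f_s}]` vanishes.  Then all
derived brackets `{f₁,…,fₙ}_Δ = ([…[[Δ,L_{f₁}],…,L_{fₙ}])(1)` with more than `s`
arguments vanish, and the `s`-th derived bracket satisfies the Leibniz rule in each
argument: `{f₁,…,f_{s−1}, g·h}_Δ = {f₁,…,f_{s−1}, g}_Δ·h + {f₁,…,f_{s−1}, h}_Δ·g`. -/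
theorem derived_brackets_of_differential_operator
    (R : Type*) [CommRing R] (A : Type*) [CommRing A] [Algebra R A]
    (Δ : Module.End R A) (s : ℕ)
    (horder : ∀ f : Fin (s + 1) → A, iterC R A Δ (List.ofFn f) = 0) :
    (∀ fs : List A, s < fs.length → (iterC R A Δ fs) 1 = 0) ∧
    (∀ (fs : List A) (g h : A), fs.length + 1 = s →
      (iterC R A Δ (fs ++ [g * h])) 1 =
        (iterC R A Δ (fs ++ [g])) 1 * h + (iterC R A Δ (fs ++ [h])) 1 * g) := by
  constructor
  · intro fs hlen
    have h1 : (fs.take (s + 1)).length = s + 1 := by simp [hlen]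
    have h2 : iterC R A Δ fs = 0 := by
      rw [← List.take_append_drop (s + 1) fs, iterC_append,
        iterC_len R A Δ s horder _ h1, iterC_zero]
    rw [h2]; rfl
  · intro fs g h hlen
    set D := iterC R A Δ fs with hD
    have hz : iterC R A Δ (fs ++ [g, h]) = 0 := by
      apply iterC_len R A Δ s horder; simp; omega
    rw [iterC_append] at hz
    have hz1 : (iterC R A D [g, h]) 1 = 0 := by rw [hz]; rfl
    simp only [iterC, LinearMap.sub_apply, Module.End.mul_apply,
      LinearMap.mulLeft_apply, mul_one] at hz1
    have e : ∀ x : A, (iterC R A Δ (fs ++ [x])) 1 = D (x) - x * D 1 := by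
      intro x
      rw [iterC_append, ← hD]
      simp [iterC]
    rw [e, e, e]
    ring_nf
    ring_nf at hz1
    linear_combination hz1
end
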